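/- Let G be a group, let g ≥ 6, and let a_1,…,a_{g−1}, y be elements of G satisfying: a_i a_j = a_j a_i for |i−j|>1; a_i a_{i+1} a_i = a_{i+1} a_i a_{i+1} for i=1,…,g−2; a_i y = y a_i for i=3,…,g−1; and a_1 y = y a_1^{−1}. Set M = a_1 a_2 ⋯ a_{g−1}, u_1 = a_1 y, and inductively u_{i+1} = M u_i^{−1} M^{−1}. Then u_4 = a_3 a_4 a_2 a_3 a_1 a_2 (a_1 y^{−1}) a_2^{−1} a_1^{−1} a_3^{−1} a_2^{−1} a_4^{−1} a_3^{−1} and u_5 = a_4 a_5 a_3 a_4 a_2 a_3 a_1 a_2 (a_1 y) a_2^{−1} a_1^{−1} a_3^{−1} a_2^{−1} a_4^{−1} a_3^{−1} a_5^{−1} a_4^{−1}. -/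

import Mathlib

private lemma tl {G : Type*} [Group G] {x z w v : G} (h : x * z = w * v) :
    ∀ t : G, x * (z * t) = w * (v * t) := fun t => by
  rw [← mul_assoc, h, mul_assoc]

theorem stmt_7 {G : Type*} [Group G] (g : ℕ) (hg : 6 ≤ g) (a : ℕ → G) (y : G)
    (hA1 : ∀ i j, 1 ≤ i → j ≤ g - 1 → i + 1 < j → a i * a j = a j * a i)
    (hA2 : ∀ i, 1 ≤ i → i ≤ g - 2 → a i * a (i + 1) * a i = a (i + 1) * a i * a (i + 1))
    (hC1' : ∀ i, 3 ≤ i → i ≤ g - 1 → a i * y = y * a i)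
    (hC4' : a 1 * y = y * (a 1)⁻¹)
    (M : G) (u : ℕ → G)
    (hM : M = ((List.range' 1 (g - 1)).map a).prod)
    (hu1 : u 1 = a 1 * y)
    (hrec : ∀ i, 1 ≤ i → u (i + 1) = M * (u i)⁻¹ * M⁻¹) :
    u 4 = a 3 * a 4 * a 2 * a 3 * a 1 * a 2 * (a 1 * y⁻¹) *
        (a 2)⁻¹ * (a 1)⁻¹ * (a 3)⁻¹ * (a 2)⁻¹ * (a 4)⁻¹ * (a 3)⁻¹ ∧
    u 5 = a 4 * a 5 * a 3 * a 4 * a 2 * a 3 * a 1 * a 2 * (a 1 * y) *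
        (a 2)⁻¹ * (a 1)⁻¹ * (a 3)⁻¹ * (a 2)⁻¹ * (a 4)⁻¹ * (a 3)⁻¹ * (a 5)⁻¹ * (a 4)⁻¹ := by
  obtain ⟨k, rfl⟩ : ∃ k, g = k + 6 := ⟨g - 6, by omega⟩
  set T : G := ((List.range' 6 k).map a).prod with hT
  have hM5 : M = a 1 * (a 2 * (a 3 * (a 4 * (a 5 * T)))) := by
    have hr : List.range' 1 (k + 6 - 1) = [1,2,3,4,5] ++ List.range' 6 k := by
      have h5 := @List.range'_append 1 5 k 1
      simp only [show (1:ℕ) + 1 * 5 = 6 by norm_num] at h5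
      rw [show k + 6 - 1 = 5 + k by omega, ← h5]
      rfl
    rw [hM, hr]
    simp [mul_assoc, hT]
  -- commutation of T
  have hTcomm : ∀ x : G, (∀ j, 6 ≤ j → j < 6 + k → x * a j = a j * x) → Commute x T := by
    intro x h
    refine Commute.list_prod_right _ _ ?_
    intro z hz
    rw [List.mem_map] at hz
    obtain ⟨j, hj, rfl⟩ := hz
    rw [List.mem_range'_1] at hj
    exact h j hj.1 hj.2
  have cT1 : Commute (a 1) T := hTcomm _ fun j h1 h2 => hA1 1 j (by omega) (by omega) (by omega)
  have cT2 : Commute (a 2) T := hTcomm _ fun j h1 h2 => hA1 2 j (by omega) (by omega) (by omega)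
  have cT3 : Commute (a 3) T := hTcomm _ fun j h1 h2 => hA1 3 j (by omega) (by omega) (by omega)
  have cT4 : Commute (a 4) T := hTcomm _ fun j h1 h2 => hA1 4 j (by omega) (by omega) (by omega)
  have cTy : Commute y T := hTcomm _ fun j h1 h2 => (hC1' j (by omega) (by omega)).symm
  -- letter relations
  have b12 : a 1 * a 2 * a 1 = a 2 * a 1 * a 2 := hA2 1 (by omega) (by omega)
  have b23 : a 2 * a 3 * a 2 = a 3 * a 2 * a 3 := hA2 2 (by omega) (by omega)
  have b34 : a 3 * a 4 * a 3 = a 4 * a 3 * a 4 := hA2 3 (by omega) (by omega)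
  have b45 : a 4 * a 5 * a 4 = a 5 * a 4 * a 5 := hA2 4 (by omega) (by omega)
  have c13 : Commute (a 1) (a 3) := hA1 1 3 (by omega) (by omega) (by omega)
  have c14 : Commute (a 1) (a 4) := hA1 1 4 (by omega) (by omega) (by omega)
  have c15 : Commute (a 1) (a 5) := hA1 1 5 (by omega) (by omega) (by omega)
  have c24 : Commute (a 2) (a 4) := hA1 2 4 (by omega) (by omega) (by omega)
  have c25 : Commute (a 2) (a 5) := hA1 2 5 (by omega) (by omega) (by omega)
  have c35 : Commute (a 3) (a 5) := hA1 3 5 (by omega) (by omega) (by omega)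
  have y3 : Commute y (a 3) := (hC1' 3 (by omega) (by omega)).symm
  have y4 : Commute y (a 4) := (hC1' 4 (by omega) (by omega)).symm
  have y5 : Commute y (a 5) := (hC1' 5 (by omega) (by omega)).symm
  -- tail versions
  have W15 : ∀ t : G, a 5 * (a 1 * t) = a 1 * (a 5 * t) :=
    fun t => by have := congrArg (· * t) c15.symm.eq; simpa [mul_assoc] using this
  have W14 : ∀ t : G, a 4 * (a 1 * t) = a 1 * (a 4 * t) :=
    fun t => by have := congrArg (· * t) c14.symm.eq; simpa [mul_assoc] using this
  have W13 : ∀ t : G, a 3 * (a 1 * t) = a 1 * (a 3 * t) :=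
    fun t => by have := congrArg (· * t) c13.symm.eq; simpa [mul_assoc] using this
  have W25 : ∀ t : G, a 5 * (a 2 * t) = a 2 * (a 5 * t) :=
    fun t => by have := congrArg (· * t) c25.symm.eq; simpa [mul_assoc] using this
  have W24 : ∀ t : G, a 4 * (a 2 * t) = a 2 * (a 4 * t) :=
    fun t => by have := congrArg (· * t) c24.symm.eq; simpa [mul_assoc] using this
  have W35 : ∀ t : G, a 5 * (a 3 * t) = a 3 * (a 5 * t) :=
    fun t => by have := congrArg (· * t) c35.symm.eq; simpa [mul_assoc] using this
  have WY3 : ∀ t : G, a 3 * (y * t) = y * (a 3 * t) :=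
    fun t => by have := congrArg (· * t) y3.symm.eq; simpa [mul_assoc] using this
  have WY4 : ∀ t : G, a 4 * (y * t) = y * (a 4 * t) :=
    fun t => by have := congrArg (· * t) y4.symm.eq; simpa [mul_assoc] using this
  have WY5 : ∀ t : G, a 5 * (y * t) = y * (a 5 * t) :=
    fun t => by have := congrArg (· * t) y5.symm.eq; simpa [mul_assoc] using this
  have B12 : ∀ t : G, a 1 * (a 2 * (a 1 * t)) = a 2 * (a 1 * (a 2 * t)) :=
    fun t => by have := congrArg (· * t) b12; simpa [mul_assoc] using this
  have B23 : ∀ t : G, a 2 * (a 3 * (a 2 * t)) = a 3 * (a 2 * (a 3 * t)) :=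
    fun t => by have := congrArg (· * t) b23; simpa [mul_assoc] using this
  have B34 : ∀ t : G, a 3 * (a 4 * (a 3 * t)) = a 4 * (a 3 * (a 4 * t)) :=
    fun t => by have := congrArg (· * t) b34; simpa [mul_assoc] using this
  have B45 : ∀ t : G, a 4 * (a 5 * (a 4 * t)) = a 5 * (a 4 * (a 5 * t)) :=
    fun t => by have := congrArg (· * t) b45; simpa [mul_assoc] using this
  have b12i : (a 1)⁻¹ * ((a 2)⁻¹ * (a 1)⁻¹) = (a 2)⁻¹ * ((a 1)⁻¹ * (a 2)⁻¹) := by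
    have := congrArg Inv.inv b12; simpa [mul_inv_rev, mul_assoc] using this
  have b23i : (a 2)⁻¹ * ((a 3)⁻¹ * (a 2)⁻¹) = (a 3)⁻¹ * ((a 2)⁻¹ * (a 3)⁻¹) := by
    have := congrArg Inv.inv b23; simpa [mul_inv_rev, mul_assoc] using this
  have b34i : (a 3)⁻¹ * ((a 4)⁻¹ * (a 3)⁻¹) = (a 4)⁻¹ * ((a 3)⁻¹ * (a 4)⁻¹) := by
    have := congrArg Inv.inv b34; simpa [mul_inv_rev, mul_assoc] using this
  have B12i : ∀ t : G, (a 1)⁻¹ * ((a 2)⁻¹ * ((a 1)⁻¹ * t)) = (a 2)⁻¹ * ((a 1)⁻¹ * ((a 2)⁻¹ * t)) :=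
    fun t => by have := congrArg (· * t) b12i; simpa [mul_assoc] using this
  have B23i : ∀ t : G, (a 2)⁻¹ * ((a 3)⁻¹ * ((a 2)⁻¹ * t)) = (a 3)⁻¹ * ((a 2)⁻¹ * ((a 3)⁻¹ * t)) :=
    fun t => by have := congrArg (· * t) b23i; simpa [mul_assoc] using this
  -- y and a1
  have ya1' : a 1 * y⁻¹ = y⁻¹ * (a 1)⁻¹ := by
    have := congrArg Inv.inv hC4'; simpa [mul_inv_rev] using this.symm
  have Y1 : ∀ t : G, a 1 * (y * t) = y * ((a 1)⁻¹ * t) :=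
    fun t => by have := congrArg (· * t) hC4'; simpa [mul_assoc] using this
  have Y1' : ∀ t : G, a 1 * (y⁻¹ * t) = y⁻¹ * ((a 1)⁻¹ * t) :=
    fun t => by have := congrArg (· * t) ya1'; simpa [mul_assoc] using this
  -- shift relations
  have sc1 : SemiconjBy M (a 1) (a 2) := by
    show M * a 1 = a 2 * M
    rw [hM5]
    simp only [mul_assoc]
    rw [← cT1.eq, W15, W14, W13, B12]
  have sc2 : SemiconjBy M (a 2) (a 3) := by
    show M * a 2 = a 3 * M
    rw [hM5]
    simp only [mul_assoc]
    rw [← cT2.eq, W25, W24, B23, W13]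
  have sc3 : SemiconjBy M (a 3) (a 4) := by
    show M * a 3 = a 4 * M
    rw [hM5]
    simp only [mul_assoc]
    rw [← cT3.eq, W35, B34, ← W24, ← W14]
  have sc4 : SemiconjBy M (a 4) (a 5) := by
    show M * a 4 = a 5 * M
    rw [hM5]
    simp only [mul_assoc]
    rw [← cT4.eq, B45, ← W35, ← W25, ← W15]
  have scy : SemiconjBy M y (a 1 * a 2 * y * (a 2)⁻¹ * (a 1)⁻¹) := by
    show M * y = a 1 * a 2 * y * (a 2)⁻¹ * (a 1)⁻¹ * M
    rw [hM5]
    simp only [mul_assoc, inv_mul_cancel_left]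
    rw [← cTy.eq, WY5, WY4, WY3]
  have S1 := tl sc1.eq
  have S2 := tl sc2.eq
  have S3 := tl sc3.eq
  have S4 := tl sc4.eq
  have S1i := tl sc1.inv_right.eq
  have S2i := tl sc2.inv_right.eq
  have S3i := tl sc3.inv_right.eq
  have S4i := tl sc4.inv_right.eq
  have Sy := tl scy.eq
  have Syi := tl scy.inv_right.eq
  have e2 : u 2 = a 1 * (a 2 * (y⁻¹ * ((a 2)⁻¹ * ((a 1)⁻¹ * (a 2)⁻¹)))) := by
    rw [hrec 1 (by norm_num), hu1]
    simp only [mul_inv_rev, mul_assoc]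
    rw [Syi, S1i]
    simp only [mul_inv_rev, mul_assoc, inv_inv, mul_inv_cancel, mul_one]
  have e3 : u 3 = a 3 * (a 2 * (a 3 * (a 1 * (a 2 * (y * ((a 2)⁻¹ * ((a 1)⁻¹ * ((a 3)⁻¹ * (a 2)⁻¹)))))))) := by
    rw [hrec 2 (by norm_num), e2]
    simp only [mul_inv_rev, mul_assoc, inv_inv]
    rw [S2, S1, S2, Sy, S2i, S1i]
    simp only [mul_inv_rev, mul_assoc, inv_inv, mul_inv_cancel, mul_one]
  have e4 : u 4 = a 3 * (a 4 * (a 2 * (a 3 * (a 1 * (a 2 * (y⁻¹ * ((a 2)⁻¹ * ((a 1)⁻¹ * ((a 3)⁻¹ * ((a 2)⁻¹ * ((a 4)⁻¹ * ((a 3)⁻¹ * (a 4)⁻¹)))))))))))) := by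
    rw [hrec 3 (by norm_num), e3]
    simp only [mul_inv_rev, mul_assoc, inv_inv]
    rw [S2, S3, S1, S2, Syi, S2i, S1i, S3i, S2i, S3i]
    simp only [mul_inv_rev, mul_assoc, inv_inv, mul_inv_cancel, mul_one]
  have e5 : u 5 = a 5 * (a 4 * (a 5 * (a 3 * (a 4 * (a 2 * (a 3 * (a 1 * (a 2 * (y * ((a 2)⁻¹ * ((a 1)⁻¹ * ((a 3)⁻¹ * ((a 2)⁻¹ * ((a 4)⁻¹ * ((a 3)⁻¹ * ((a 5)⁻¹ * (a 4)⁻¹)))))))))))))))) := by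
    rw [hrec 4 (by norm_num), e4]
    simp only [mul_inv_rev, mul_assoc, inv_inv]
    rw [S4, S3, S4, S2, S3, S1, S2, Sy, S2i, S1i, S3i, S2i, S4i, S3i]
    simp only [mul_inv_rev, mul_assoc, inv_inv, mul_inv_cancel, mul_one]
  constructor
  · simp only [mul_assoc]
    rw [e4, ← b34i, ← B23i, ← B12i, ← Y1']
  · simp only [mul_assoc]
    rw [e5, ← B45, ← B34, ← B23, ← B12]
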